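/- Let 𝔛 be a classical configuration with exactly one empty colour, let Γ_𝔛 be the graph of nonempty-coloured pairs, and let φ be an automorphism of 𝔛 such that every nontrivial power of φ is fixed-point-free. If v, w ∈ Γ and k ≥ 0 satisfy d(v, φⁱ(w)) > 2^k in Γ_𝔛 for every integer i, then the Weisfeiler–Leman colours c^{(k)}(v, φⁱ(w)) are equal for all i. -/

import Mathlib

universe u v

/-- The type of colours after `k` Weisfeiler-Leman iterations. -/
def WLColor (C : Type v) : ℕ → Type v
  | 0 => C
  | k + 1 => WLColor C k × (WLColor C k → WLColor C k → ℕ)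

/-- The Weisfeiler-Leman iterated colouring. -/
noncomputable def WLiter {Γ : Type u} {C : Type v} (c : Γ → Γ → C) :
    (k : ℕ) → Γ → Γ → WLColor C k
  | 0 => c
  | k + 1 => fun v₁ v₂ =>
      (WLiter c k v₁ v₂,
        fun c₁ c₂ => Nat.card {w : Γ // WLiter c k v₁ w = c₁ ∧ WLiter c k w v₂ = c₂})

/-- The number of nontrivial Weisfeiler-Leman iterations: the first `k` at which
the step `k → k+1` does not refine the partition of `Γ × Γ`. -/
noncomputable def WLnum {Γ : Type u} {C : Type v} (c : Γ → Γ → C) : ℕ :=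
  sInf {k | ∀ v₁ v₂ u₁ u₂ : Γ,
    WLiter c (k + 1) v₁ v₂ = WLiter c (k + 1) u₁ u₂ ↔
      WLiter c k v₁ v₂ = WLiter c k u₁ u₂}

/-- A colour is nonempty if each vertex has at most one outgoing edge of that colour. -/
def NonemptyColor {Γ : Type u} {C : Type v} (c : Γ → Γ → C) (c₀ : C) : Prop :=
  ∀ v w w' : Γ, c v w = c₀ → c v w' = c₀ → w = w'

/-- Existence of a directed walk of length `n`. -/
def dWalk {Γ : Type u} (R : Γ → Γ → Prop) : ℕ → Γ → Γ → Prop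
  | 0, v, w => v = w
  | n + 1, v, w => ∃ u, R v u ∧ dWalk R n u w

/-- Directed graph distance. -/
noncomputable def ddist {Γ : Type u} (R : Γ → Γ → Prop) (v w : Γ) : ℕ :=
  sInf {n | dWalk R n v w}

/-- Diameter of a directed graph. -/
noncomputable def ddiam {Γ : Type u} (R : Γ → Γ → Prop) : ℕ :=
  sSup (Set.range fun p : Γ × Γ => ddist R p.1 p.2)

/-- `ColorWalk c x y cs ws` means `ws` is the list of intermediate vertices of a walk from
`x` to `y` whose consecutive edges have the colours listed in `cs`. -/
def ColorWalk {Γ : Type u} {C : Type v} (c : Γ → Γ → C) :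
    Γ → Γ → List C → List Γ → Prop
  | x, y, [d], [] => c x y = d
  | x, y, d :: ds, u :: us => c x u = d ∧ ColorWalk c u y ds us
  | _, _, _, _ => False

section Aux
universe u' v'
variable {Γ : Type u'} {C : Type v'}

lemma my_dWalk_trans {R : Γ → Γ → Prop} {m n : ℕ} {a b c' : Γ}
    (h1 : dWalk R m a b) (h2 : dWalk R n b c') : dWalk R (m + n) a c' := by
  induction m generalizing a with
  | zero => rw [dWalk] at h1; subst h1; simpa using h2
  | succ m ih =>
      obtain ⟨u, hu, hw⟩ := h1
      rw [Nat.succ_add]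
      exact ⟨u, hu, ih hw⟩

lemma my_dWalk_map {R : Γ → Γ → Prop} (ψ : Equiv.Perm Γ)
    (hψ : ∀ a b, R a b → R (ψ a) (ψ b)) {n : ℕ} {a b : Γ}
    (h : dWalk R n a b) : dWalk R n (ψ a) (ψ b) := by
  induction n generalizing a with
  | zero => rw [dWalk] at h ⊢; rw [h]
  | succ n ih => obtain ⟨u, hu, hw⟩ := h; exact ⟨ψ u, hψ _ _ hu, ih hw⟩

lemma my_c_zpow (c : Γ → Γ → C) (φ : Equiv.Perm Γ)
    (hφc : ∀ a b, c (φ a) (φ b) = c a b) (m : ℤ) :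
    ∀ a b : Γ, c ((φ ^ m) a) ((φ ^ m) b) = c a b := by
  induction m using Int.induction_on with
  | zero => simp
  | succ n ih =>
      intro a b
      have h : ∀ x : Γ, (φ ^ ((n : ℤ) + 1)) x = (φ ^ (n : ℤ)) (φ x) := by
        intro x; rw [zpow_add_one, Equiv.Perm.mul_apply]
      rw [h, h, ih, hφc]
  | pred n ih =>
      intro a b
      have h : ∀ x : Γ, (φ ^ (-(n : ℤ) - 1)) x = (φ ^ (-(n : ℤ))) (φ⁻¹ x) := by
        intro x; rw [zpow_sub_one, Equiv.Perm.mul_apply]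
      rw [h, h, ih]
      have h2 := hφc (φ⁻¹ a) (φ⁻¹ b)
      simpa using h2.symm

lemma my_WLiter_inv (c : Γ → Γ → C) (ψ : Equiv.Perm Γ)
    (hψ : ∀ a b, c (ψ a) (ψ b) = c a b) :
    ∀ (k : ℕ) (a b : Γ), WLiter c k (ψ a) (ψ b) = WLiter c k a b := by
  intro k
  induction k with
  | zero => exact hψ
  | succ k ih =>
    intro a b
    show (WLiter c k (ψ a) (ψ b),
        fun c₁ c₂ => Nat.card {x : Γ // WLiter c k (ψ a) x = c₁ ∧ WLiter c k x (ψ b) = c₂})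
      = (WLiter c k a b,
        fun c₁ c₂ => Nat.card {x : Γ // WLiter c k a x = c₁ ∧ WLiter c k x b = c₂})
    refine congrArg₂ Prod.mk (ih a b) ?_
    funext c₁ c₂
    refine Nat.card_congr (Equiv.subtypeEquiv ψ.symm fun x => ?_)
    rw [← ih a (ψ.symm x), ← ih (ψ.symm x) b, Equiv.apply_symm_apply]
end Aux

/-- If all the `φⁱ(w)` are at distance greater than `2^k` from `v`, then the pairs
`(v, φⁱ(w))` all have the same Weisfeiler-Leman colour at step `k`. -/


theorem WL_orbit_colors_equal {Γ : Type u} {C : Type v} [Finite Γ] (c : Γ → Γ → C)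
    (hi : ∀ (c₀ : C) (v : Γ), c v v = c₀ → ∀ v₁ v₂ : Γ, c v₁ v₂ = c₀ → v₁ = v₂)
    (hii : ∀ c₀ : C, ∃ c₀' : C, ∀ v₁ v₂ : Γ, c v₁ v₂ = c₀ → c v₂ v₁ = c₀')
    (emp : C) (hempty : ¬ NonemptyColor c emp)
    (hne : ∀ c₀ : C, c₀ ≠ emp → NonemptyColor c c₀)
    (R : Γ → Γ → Prop) (hR : ∀ v w : Γ, R v w ↔ NonemptyColor c (c v w))
    (φ : Equiv.Perm Γ) (hφc : ∀ v w : Γ, c (φ v) (φ w) = c v w)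
    (hffp : ∀ i : ℤ, φ ^ i ≠ 1 → ∀ v : Γ, (φ ^ i) v ≠ v)
    (v w : Γ) (k : ℕ)
    (hd : ∀ i : ℤ, ∀ n : ℕ, n ≤ 2 ^ k → ¬ dWalk R n v ((φ ^ i) w)) :
    ∀ i j : ℤ, WLiter c k v ((φ ^ i) w) = WLiter c k v ((φ ^ j) w) := by
  have happ : ∀ (s t : ℤ) (x : Γ), (φ ^ s) ((φ ^ t) x) = (φ ^ (s + t)) x := by
    intro s t x; rw [← Equiv.Perm.mul_apply, ← zpow_add]
  have hRinv : ∀ (m : ℤ) (a b : Γ), R a b → R ((φ ^ m) a) ((φ ^ m) b) := by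
    intro m a b hab
    rw [hR, my_c_zpow c φ hφc m]
    rwa [hR] at hab
  have WLz : ∀ (m : ℤ) (k' : ℕ) (a b : Γ),
      WLiter c k' ((φ ^ m) a) ((φ ^ m) b) = WLiter c k' a b :=
    fun m k' => my_WLiter_inv c (φ ^ m) (my_c_zpow c φ hφc m) k'
  revert hd
  induction k generalizing v w with
  | zero =>
    intro hd i j
    have key : ∀ t : ℤ, c v ((φ ^ t) w) = emp := by
      intro t
      by_contra h
      have h1 : R v ((φ ^ t) w) := (hR _ _).mpr (hne _ h)
      exact hd t 1 (by norm_num) ⟨_, h1, rfl⟩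
    show c v ((φ ^ i) w) = c v ((φ ^ j) w)
    rw [key i, key j]
  | succ k ih =>
    intro hd i j
    have hd' : ∀ (v' w' : Γ), (∀ t : ℤ, ∀ n : ℕ, n ≤ 2 ^ k → ¬ dWalk R n v' ((φ ^ t) w')) →
        ∀ i' j' : ℤ, WLiter c k v' ((φ ^ i') w') = WLiter c k v' ((φ ^ j') w') := ih
    have hdk : ∀ t : ℤ, ∀ n : ℕ, n ≤ 2 ^ k → ¬ dWalk R n v ((φ ^ t) w) := by
      intro t n hn
      exact hd t n (hn.trans (Nat.pow_le_pow_right (by norm_num) (Nat.le_succ k)))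
    -- the set of x whose orbit meets the forward 2^k-ball of v
    set G : Γ → Prop := fun x => ∃ m : ℤ, ∃ n : ℕ, n ≤ 2 ^ k ∧ dWalk R n v ((φ ^ m) x)
      with hGdef
    have hGfwd : ∀ (t : ℤ) (x : Γ), G x → G ((φ ^ t) x) := by
      rintro t x ⟨m, n, hn, hwk⟩
      refine ⟨m - t, n, hn, ?_⟩
      rwa [happ, sub_add_cancel]
    have hGbwd : ∀ (t : ℤ) (x : Γ), G ((φ ^ t) x) → G x := by
      intro t x hx
      have h2 := hGfwd (-t) _ hx
      rwa [happ, neg_add_cancel, zpow_zero, Equiv.Perm.one_apply] at h2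
    -- for x in G, the whole orbit of w is far from x
    have keyG : ∀ x : Γ, G x →
        WLiter c k x ((φ ^ i) w) = WLiter c k x ((φ ^ j) w) := by
      rintro x ⟨m, n, hn, hwk⟩
      refine hd' x w (fun t n' hn' hw' => ?_) i j
      have hw2 : dWalk R n' ((φ ^ m) x) ((φ ^ (m + t)) w) := by
        have := my_dWalk_map (φ ^ m) (hRinv m) hw'
        rwa [happ] at this
      have hw3 : dWalk R (n + n') v ((φ ^ (m + t)) w) := my_dWalk_trans hwk hw2
      exact hd (m + t) (n + n')
        (by rw [pow_succ]; omega) hw3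
    -- for x not in G, the whole orbit of x is far from v
    have keyN : ∀ x : Γ, ¬ G x → ∀ t : ℤ,
        WLiter c k v ((φ ^ t) x) = WLiter c k v x := by
      intro x hx t
      have h2 := hd' v x (fun m n hn hw => hx ⟨m, n, hn, hw⟩) t 0
      rwa [zpow_zero, Equiv.Perm.one_apply] at h2
    classical
    -- the permutation used to match the counting sets
    let σ : Equiv.Perm Γ :=
      { toFun := fun x => if G x then x else (φ ^ (j - i)) x
        invFun := fun x => if G x then x else (φ ^ (i - j)) x
        left_inv := by
          intro x
          by_cases hx : G x
          · simp [hx]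
          · have hx2 : ¬ G ((φ ^ (j - i)) x) := fun h => hx (hGbwd _ _ h)
            simp only [hx, hx2, if_neg, if_false]
            rw [happ, sub_add_sub_cancel', sub_self, zpow_zero, Equiv.Perm.one_apply]
        right_inv := by
          intro x
          by_cases hx : G x
          · simp [hx]
          · have hx2 : ¬ G ((φ ^ (i - j)) x) := fun h => hx (hGbwd _ _ h)
            simp only [hx, hx2, if_neg, if_false]
            rw [happ, sub_add_sub_cancel', sub_self, zpow_zero, Equiv.Perm.one_apply] }
    have hσ : ∀ x : Γ, WLiter c k v (σ x) = WLiter c k v x ∧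
        WLiter c k (σ x) ((φ ^ j) w) = WLiter c k x ((φ ^ i) w) := by
      intro x
      by_cases hx : G x
      · have hσx : σ x = x := if_pos hx
        rw [hσx]
        exact ⟨rfl, (keyG x hx).symm⟩
      · have hσx : σ x = (φ ^ (j - i)) x := if_neg hx
        rw [hσx]
        constructor
        · exact keyN x hx (j - i)
        · have h2 := WLz (j - i) k x ((φ ^ i) w)
          rwa [happ, sub_add_cancel] at h2
    show (WLiter c k v ((φ ^ i) w), fun c₁ c₂ =>
        Nat.card {x : Γ // WLiter c k v x = c₁ ∧ WLiter c k x ((φ ^ i) w) = c₂})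
      = (WLiter c k v ((φ ^ j) w), fun c₁ c₂ =>
        Nat.card {x : Γ // WLiter c k v x = c₁ ∧ WLiter c k x ((φ ^ j) w) = c₂})
    refine congrArg₂ Prod.mk (hd' v w hdk i j) ?_
    funext c₁ c₂
    refine Nat.card_congr (Equiv.subtypeEquiv σ fun x => ?_)
    rw [(hσ x).1, (hσ x).2]
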